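/- Let A ∈ ℝ^{n×n}, B ∈ ℝ^{n×u}, C ∈ ℝ^{y×n}, B₁ ∈ ℝ^{n×w}, C₁ ∈ ℝ^{z×n}, D₁₂ ∈ ℝ^{z×u}, K ∈ ℝ^{u×y}, and let P ∈ 𝕊ₙ, W ∈ 𝕊_z. Define A_cl = A + B·K·C and C_cl = C₁ + D₁₂·K·C. Assume B₁·B₁ᵀ is positive definite and the symmetric 3×3 block matrix [[A_cl·P + P·A_clᵀ + B₁·B₁ᵀ, 0, 0], [0, −W, C_cl·P], [0, P·C_clᵀ, −P]] is negative semidefinite. Then: (i) P is positive definite; (ii) every complex eigenvalue of A_cl has strictly negative real part; and (iii) W − C_cl·P·C_clᵀ is positive semidefinite, so tr(W) ≥ tr(C_cl·P·C_clᵀ). -/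

import Mathlib

open Matrix

section AuxLemmas

variable {m o : Type*} [Fintype m] [Fintype o]

lemma psd_block₁ {A : Matrix m m ℝ} {B : Matrix m o ℝ} {C : Matrix o m ℝ} {D : Matrix o o ℝ}
    (h : (fromBlocks A B C D).PosSemidef) : A.PosSemidef := by
  obtain ⟨hH, hq⟩ := posSemidef_iff_dotProduct_mulVec.mp h
  rw [isHermitian_fromBlocks_iff] at hH
  refine .of_dotProduct_mulVec_nonneg hH.1 fun v => ?_
  have := hq (Sum.elim v 0)
  simpa [fromBlocks_mulVec, dotProduct_block] using this

lemma psd_block₂ {A : Matrix m m ℝ} {B : Matrix m o ℝ} {C : Matrix o m ℝ} {D : Matrix o o ℝ}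
    (h : (fromBlocks A B C D).PosSemidef) : D.PosSemidef := by
  obtain ⟨hH, hq⟩ := posSemidef_iff_dotProduct_mulVec.mp h
  rw [isHermitian_fromBlocks_iff] at hH
  refine .of_dotProduct_mulVec_nonneg hH.2.2.2 fun v => ?_
  have := hq (Sum.elim 0 v)
  simpa [fromBlocks_mulVec, dotProduct_block] using this

end AuxLemmas

lemma re_quad {k : ℕ} (R : Matrix (Fin k) (Fin k) ℝ) (x : Fin k → ℂ) :
    (star x ⬝ᵥ (R.map (algebraMap ℝ ℂ)) *ᵥ x).re =
      (fun i => (x i).re) ⬝ᵥ (R *ᵥ fun i => (x i).re)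
      + (fun i => (x i).im) ⬝ᵥ (R *ᵥ fun i => (x i).im) := by
  simp only [dotProduct, mulVec, Pi.star_apply, Finset.mul_sum, Complex.re_sum, map_apply]
  rw [← Finset.sum_add_distrib]
  refine Finset.sum_congr rfl fun i _ => ?_
  rw [← Finset.sum_add_distrib]
  refine Finset.sum_congr rfl fun j _ => ?_
  simp only [RCLike.star_def, Complex.mul_re, Complex.mul_im, Complex.conj_re, Complex.conj_im,
    Complex.ofReal_re, Complex.ofReal_im, Complex.coe_algebraMap]
  ring

lemma re_quad_pos {k : ℕ} {R : Matrix (Fin k) (Fin k) ℝ} (hR : R.PosDef)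
    {x : Fin k → ℂ} (hx : x ≠ 0) :
    0 < (star x ⬝ᵥ (R.map (algebraMap ℝ ℂ)) *ᵥ x).re := by
  rw [re_quad]
  set a : Fin k → ℝ := fun i => (x i).re with ha
  set b : Fin k → ℝ := fun i => (x i).im with hb
  have hab : a ≠ 0 ∨ b ≠ 0 := by
    by_contra hc
    push_neg at hc
    apply hx
    funext i
    have h1 : (x i).re = 0 := congrFun hc.1 i
    have h2 : (x i).im = 0 := congrFun hc.2 i
    exact Complex.ext h1 h2
  rcases hab with hA | hB
  · have h1 := hR.dotProduct_mulVec_pos hA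
    have h2 := hR.posSemidef.dotProduct_mulVec_nonneg b
    simp only [star_trivial] at h1 h2
    linarith
  · have h1 := hR.posSemidef.dotProduct_mulVec_nonneg a
    have h2 := hR.dotProduct_mulVec_pos hB
    simp only [star_trivial] at h1 h2
    linarith

lemma trace_nonneg_of_psd {k : ℕ} {M : Matrix (Fin k) (Fin k) ℝ} (hM : M.PosSemidef) :
    0 ≤ M.trace := by
  rw [Matrix.trace]
  refine Finset.sum_nonneg fun i _ => ?_
  have := hM.dotProduct_mulVec_nonneg (Pi.single i 1)
  simpa [Matrix.diag, dotProduct, mulVec, Pi.single_apply] using this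

/-- Proposition 1 (H₂ design): feasibility of the BMI constraint
`[[A_cl P + P A_clᵀ + B₁ B₁ᵀ, 0, 0], [0, -W, C_cl P], [0, P C_clᵀ, -P]] ⪯ 0`
with `B₁ B₁ᵀ ≻ 0` implies that `P ≻ 0`, the closed-loop matrix `A_cl = A + B K C` is Hurwitz,
and `W - C_cl P C_clᵀ ⪰ 0`, whence `tr W ≥ tr (C_cl P C_clᵀ)`. -/
theorem h2_bmi_feasibility {n u y w z : ℕ}
    (A : Matrix (Fin n) (Fin n) ℝ) (B : Matrix (Fin n) (Fin u) ℝ)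
    (C : Matrix (Fin y) (Fin n) ℝ) (B₁ : Matrix (Fin n) (Fin w) ℝ)
    (C₁ : Matrix (Fin z) (Fin n) ℝ) (D₁₂ : Matrix (Fin z) (Fin u) ℝ)
    (K : Matrix (Fin u) (Fin y) ℝ)
    (P : Matrix (Fin n) (Fin n) ℝ) (W : Matrix (Fin z) (Fin z) ℝ)
    (hP : P.IsSymm) (hW : W.IsSymm)
    (hB₁ : (B₁ * B₁ᵀ).PosDef)
    (h : (-(fromBlocks
        ((A + B * K * C) * P + P * (A + B * K * C)ᵀ + B₁ * B₁ᵀ) 0 0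
        (fromBlocks (-W) ((C₁ + D₁₂ * K * C) * P)
          (P * (C₁ + D₁₂ * K * C)ᵀ) (-P)))).PosSemidef) :
    P.PosDef ∧
    (∀ μ ∈ spectrum ℂ ((A + B * K * C).map (algebraMap ℝ ℂ)), μ.re < 0) ∧
    (W - (C₁ + D₁₂ * K * C) * P * (C₁ + D₁₂ * K * C)ᵀ).PosSemidef ∧
    ((C₁ + D₁₂ * K * C) * P * (C₁ + D₁₂ * K * C)ᵀ).trace ≤ W.trace := by
  set Acl : Matrix (Fin n) (Fin n) ℝ := A + B * K * C with hAcl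
  set Ccl : Matrix (Fin z) (Fin n) ℝ := C₁ + D₁₂ * K * C with hCcl
  rw [fromBlocks_neg] at h
  simp only [neg_zero, fromBlocks_neg, neg_neg] at h
  have h1 : (-(Acl * P + P * Aclᵀ + B₁ * B₁ᵀ)).PosSemidef := psd_block₁ h
  have h2 : (fromBlocks W (-(Ccl * P)) (-(P * Cclᵀ)) P).PosSemidef := psd_block₂ h
  have hPsd : P.PosSemidef := psd_block₂ h2
  -- the Lyapunov decrement is positive definite
  have hQ : (-(Acl * P + P * Aclᵀ)).PosDef := by
    rw [posDef_iff_dotProduct_mulVec]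
    constructor
    · have hh : (-(Acl * P + P * Aclᵀ + B₁ * B₁ᵀ) + B₁ * B₁ᵀ).IsHermitian :=
        h1.1.add hB₁.1
      have : -(Acl * P + P * Aclᵀ + B₁ * B₁ᵀ) + B₁ * B₁ᵀ = -(Acl * P + P * Aclᵀ) := by
        abel
      rwa [this] at hh
    · intro v hv
      have e1 := h1.dotProduct_mulVec_nonneg v
      have e2 := hB₁.dotProduct_mulVec_pos hv
      simp only [neg_add, neg_mulVec, add_mulVec, dotProduct_add, dotProduct_neg,
        star_trivial] at e1 e2 ⊢
      linarith
  -- P is positive definite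
  have hPdef : P.PosDef := by
    refine .of_dotProduct_mulVec_pos hPsd.1 fun v hv => ?_
    rcases lt_or_eq_of_le (hPsd.dotProduct_mulVec_nonneg v) with hlt | heq
    · exact hlt
    · exfalso
      have hPv : P *ᵥ v = 0 := (hPsd.dotProduct_mulVec_zero_iff v).1 heq.symm
      have hq := hQ.dotProduct_mulVec_pos hv
      have hvP : star v ᵥ* P = 0 := by
        have : star v ᵥ* P = Pᵀ *ᵥ star v := (Matrix.mulVec_transpose P (star v)).symm
        rw [this, hP]
        simpa using hPv
      rw [neg_mulVec, dotProduct_neg, add_mulVec, dotProduct_add,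
        ← Matrix.mulVec_mulVec, ← Matrix.mulVec_mulVec, hPv,
        Matrix.mulVec_zero, dotProduct_zero, dotProduct_mulVec, hvP,
        zero_dotProduct] at hq
      simp at hq
  refine ⟨hPdef, ?_, ?_⟩
  · -- Hurwitz
    intro μ hμ
    rw [spectrum.mem_iff] at hμ
    set M : Matrix (Fin n) (Fin n) ℂ := Acl.map (algebraMap ℝ ℂ) with hM
    set S : Matrix (Fin n) (Fin n) ℂ := algebraMap ℂ (Matrix (Fin n) (Fin n) ℂ) μ - M with hS
    have hdet : S.det = 0 := by
      by_contra hd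
      exact hμ ((Matrix.isUnit_iff_isUnit_det _).2 (isUnit_iff_ne_zero.2 hd))
    have hdetT : (Sᵀ).det = 0 := by rw [Matrix.det_transpose]; exact hdet
    obtain ⟨x, hx0, hxe⟩ := (Matrix.exists_mulVec_eq_zero_iff).2 hdetT
    have hMx : Mᵀ *ᵥ x = μ • x := by
      have hSx : Sᵀ = μ • (1 : Matrix (Fin n) (Fin n) ℂ) - Mᵀ := by
        rw [hS, transpose_sub]
        congr 1
        rw [Algebra.algebraMap_eq_smul_one, transpose_smul, transpose_one]
      rw [hSx, sub_mulVec, smul_mulVec, one_mulVec] at hxe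
      linear_combination (norm := module) -hxe
    have hMH : Mᴴ = Mᵀ := by
      rw [hM, ← Matrix.transpose_map,
        ← Matrix.conjTranspose_map (⇑(algebraMap ℝ ℂ)) (fun a => by simp [Complex.conj_ofReal]),
        Matrix.conjTranspose_eq_transpose_of_trivial]
    set Pc : Matrix (Fin n) (Fin n) ℂ := P.map (algebraMap ℝ ℂ) with hPc
    set e : ℂ := star x ⬝ᵥ Pc *ᵥ x with he
    have key : star x ⬝ᵥ (((Acl * P + P * Aclᵀ).map (algebraMap ℝ ℂ)) *ᵥ x)
        = ((starRingEnd ℂ) μ + μ) * e := by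
      have hmap : (Acl * P + P * Aclᵀ).map (algebraMap ℝ ℂ) = M * Pc + Pc * Mᵀ := by
        rw [Matrix.map_add _ (map_add (algebraMap ℝ ℂ)), Matrix.map_mul, Matrix.map_mul,
          Matrix.transpose_map]
      rw [hmap, add_mulVec, dotProduct_add]
      have p2 : star x ⬝ᵥ (Pc * Mᵀ) *ᵥ x = μ * e := by
        rw [← Matrix.mulVec_mulVec, hMx, Matrix.mulVec_smul, dotProduct_smul, smul_eq_mul]
      have p1 : star x ⬝ᵥ (M * Pc) *ᵥ x = (starRingEnd ℂ) μ * e := by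
        rw [← Matrix.mulVec_mulVec, dotProduct_mulVec]
        have hxM : star x ᵥ* M = star (μ • x) := by
          rw [← hMx, ← hMH, Matrix.star_mulVec, Matrix.conjTranspose_conjTranspose]
        rw [hxM, star_smul, smul_dotProduct]
        simp [smul_eq_mul, Complex.star_def, he]
      rw [p1, p2, add_mul]
    have hq1 := re_quad_pos hQ hx0
    have hq2 : (star x ⬝ᵥ ((-(Acl * P + P * Aclᵀ)).map (algebraMap ℝ ℂ)) *ᵥ x).re
        = - (star x ⬝ᵥ ((Acl * P + P * Aclᵀ).map (algebraMap ℝ ℂ)) *ᵥ x).re := by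
      rw [re_quad, re_quad]
      simp only [neg_mulVec, dotProduct_neg]
      ring
    have he_pos : 0 < e.re := re_quad_pos hPdef hx0
    have hre : (star x ⬝ᵥ ((Acl * P + P * Aclᵀ).map (algebraMap ℝ ℂ)) *ᵥ x).re
        = 2 * μ.re * e.re := by
      rw [key]
      simp only [Complex.mul_re, Complex.add_re, Complex.conj_re, Complex.add_im,
        Complex.conj_im]
      ring
    nlinarith [hq1, hq2, he_pos, hre]
  · -- Schur complement
    have hInv : Invertible P := P.invertibleOfIsUnitDet hPdef.det_pos.ne'.isUnit
    have hB' : (-(P * Cclᵀ)) = (-(Ccl * P))ᴴ := by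
      rw [conjTranspose_neg, Matrix.conjTranspose_eq_transpose_of_trivial, transpose_mul,
        hP]
    rw [hB'] at h2
    have hs := (Matrix.PosDef.fromBlocks₂₂ W (-(Ccl * P)) hPdef).1 h2
    have hCP : Ccl * P * P⁻¹ = Ccl := by
      rw [Matrix.mul_assoc, Matrix.mul_inv_of_invertible, Matrix.mul_one]
    have hschur : W - -(Ccl * P) * P⁻¹ * (-(Ccl * P))ᴴ = W - Ccl * P * Cclᵀ := by
      rw [conjTranspose_neg, Matrix.conjTranspose_eq_transpose_of_trivial, transpose_mul, hP,
        Matrix.neg_mul, Matrix.neg_mul, Matrix.mul_neg, neg_neg, Matrix.mul_assoc (Ccl * P) P⁻¹,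
        ← Matrix.mul_assoc P⁻¹, Matrix.inv_mul_of_invertible, Matrix.one_mul]
    rw [hschur] at hs
    refine ⟨hs, ?_⟩
    have := trace_nonneg_of_psd hs
    rw [Matrix.trace_sub] at this
    linarith
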